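/- Let (A, m) be a Noetherian local ring and I an m-primary m-full ideal. Then there exists an ideal I' ⊇ I having the strong Rees property with μ(I') = μ(I). -/

import Mathlib

open IsLocalRing

/-- `mu I` is the minimal number of generators of the ideal `I`. -/
noncomputable def mu {A : Type*} [CommRing A] (I : Ideal A) : ℕ :=
  sInf {n | ∃ s : Finset A, s.card = n ∧ Ideal.span (s : Set A) = I}

open scoped Classical

section ChainBound

variable {A : Type*} [CommRing A]

/-- `cbd N P n` : every strictly increasing chain of ideals lying between `N` and `P`
has length at most `n`. -/
def cbd (N P : Ideal A) (n : ℕ) : Prop :=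
  ∀ c : LTSeries (Ideal A), N ≤ c.head → c.last ≤ P → c.length ≤ n

lemma cbd_mono {N N' P P' : Ideal A} {n : ℕ} (h1 : N' ≤ N) (h2 : P ≤ P')
    (h : cbd N' P' n) : cbd N P n :=
  fun c hc1 hc2 => h c (h1.trans hc1) (hc2.trans h2)

lemma cbd_self (P : Ideal A) : cbd P P 0 := by
  intro c hc1 hc2
  by_contra h
  have h0 : (0 : ℕ) < c.length := Nat.pos_of_ne_zero (fun hc => h (by omega))
  have : c.head < c.last := by
    have := c.strictMono (show (0 : Fin (c.length + 1)) < Fin.last c.length by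
      simp [Fin.lt_def, h0])
    exact this
  exact absurd ((hc1.trans_lt this).trans_le hc2) (lt_irrefl _)

/-- From a monotone sequence one can extract a strict chain whose length is at least the
number of strict steps. -/
lemma exists_ltSeries_of_monotone {α : Type*} [PartialOrder α] (u : ℕ → α) (hu : Monotone u)
    (n : ℕ) :
    ∃ c : LTSeries α, c.head = u 0 ∧ c.last = u n ∧
      ((Finset.range n).filter (fun i => u i < u (i + 1))).card ≤ c.length := by
  induction n with
  | zero => exact ⟨RelSeries.singleton _ (u 0), rfl, rfl, by simp⟩
  | succ n ih =>
    obtain ⟨c, hh, hl, hcard⟩ := ih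
    rw [Finset.range_add_one, Finset.filter_insert]
    by_cases hstep : u n < u (n + 1)
    · refine ⟨c.snoc (u (n + 1)) (hl ▸ hstep), by simp [hh], by simp, ?_⟩
      rw [if_pos hstep, Finset.card_insert_of_notMem (by simp)]
      exact Nat.succ_le_succ hcard
    · have : u (n + 1) = u n := le_antisymm (by
        rcases (hu (Nat.le_succ n)).lt_or_eq with h | h
        · exact absurd h hstep
        · exact h.ge) (hu (Nat.le_succ n))
      exact ⟨c, hh, by rw [hl, this], by rwa [if_neg hstep]⟩

/-- The key "modular lattice" subadditivity of chain bounds. -/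
lemma cbd_mod {N P R : Ideal A} {a b : ℕ} (hNP : N ≤ P) (hPR : P ≤ R)
    (ha : cbd N P a) (hb : cbd P R b) : cbd N R (a + b) := by
  intro c hc1 hc2
  set L := c.length with hL
  -- extend the chain to a monotone ℕ-indexed sequence
  set w : ℕ → Ideal A := fun i => c ⟨min i L, by omega⟩ with hw
  have hwmono : Monotone w := by
    intro i j hij
    exact c.monotone (by simp [Fin.le_def]; omega)
  have hwstrict : ∀ i < L, w i < w (i + 1) := by
    intro i hi
    apply c.strictMono
    simp [Fin.lt_def]; omega
  have hw0 : w 0 = c.head := by simp [hw, RelSeries.head]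
  have hwL : w L = c.last := by
    simp only [hw, RelSeries.last]
    congr 1
    simp [Fin.ext_iff]; exact hL
  set u : ℕ → Ideal A := fun i => w i ⊓ P with hu
  set v : ℕ → Ideal A := fun i => w i ⊔ P with hv
  have humono : Monotone u := fun i j hij => inf_le_inf_right P (hwmono hij)
  have hvmono : Monotone v := fun i j hij => sup_le_sup_right (hwmono hij) P
  -- each step is strict in u or in v
  have hstep : ∀ i ∈ Finset.range L, u i < u (i + 1) ∨ v i < v (i + 1) := by
    intro i hi
    rw [Finset.mem_range] at hi
    by_contra hcon
    push_neg at hcon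
    obtain ⟨h1, h2⟩ := hcon
    have h1' : u (i + 1) ≤ u i := (humono (Nat.le_succ i)).lt_or_eq.resolve_left h1 |>.ge
    have h2' : v (i + 1) ≤ v i := (hvmono (Nat.le_succ i)).lt_or_eq.resolve_left h2 |>.ge
    have := eq_of_le_of_inf_le_of_sup_le (hwstrict i hi).le h1' h2'
    exact absurd this (hwstrict i hi).ne
  have hcards : L ≤ ((Finset.range L).filter (fun i => u i < u (i + 1))).card
      + ((Finset.range L).filter (fun i => v i < v (i + 1))).card := by
    calc L = (Finset.range L).card := (Finset.card_range L).symm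
    _ = ((Finset.range L).filter (fun i => u i < u (i + 1)) ∪
        (Finset.range L).filter (fun i => v i < v (i + 1))).card := by
        congr 1
        rw [← Finset.filter_or]
        exact (Finset.filter_true_of_mem hstep).symm
    _ ≤ _ := Finset.card_union_le _ _
  obtain ⟨cu, hcu1, hcu2, hcu3⟩ := exists_ltSeries_of_monotone u humono L
  obtain ⟨cv, hcv1, hcv2, hcv3⟩ := exists_ltSeries_of_monotone v hvmono L
  have hua : ((Finset.range L).filter (fun i => u i < u (i + 1))).card ≤ a := by
    refine hcu3.trans (ha cu ?_ ?_)
    · rw [hcu1]; exact le_inf (hw0 ▸ hc1) hNP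
    · rw [hcu2]; exact inf_le_right
  have hvb : ((Finset.range L).filter (fun i => v i < v (i + 1))).card ≤ b := by
    refine hcv3.trans (hb cv ?_ ?_)
    · rw [hcv1]; exact le_sup_right
    · rw [hcv2]; exact sup_le (hwL ▸ hc2) hPR
  omega

end ChainBound

section VS

variable {A : Type*} [CommRing A] [IsLocalRing A]

lemma torsion_aux (N P : Ideal A) (hmP : maximalIdeal A * P ≤ N) :
    Module.IsTorsionBySet A ↥(Submodule.map N.mkQ P) ((maximalIdeal A : Ideal A) : Set A) := by
  rintro ⟨w, hw⟩ ⟨a, ha⟩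
  obtain ⟨p, hp, rfl⟩ := Submodule.mem_map.mp hw
  apply Subtype.ext
  show a • (N.mkQ p) = 0
  rw [← map_smul, Submodule.mkQ_apply, Submodule.Quotient.mk_eq_zero]
  exact hmP (Ideal.mul_mem_mul ha hp)

lemma ltSeries_length_le_finrank {K V : Type*} [DivisionRing K] [AddCommGroup V] [Module K V]
    [FiniteDimensional K V] (p : LTSeries (Submodule K V)) :
    p.length ≤ Module.finrank K V := by
  suffices h : ∀ n (p : LTSeries (Submodule K V)), p.length = n →
      n ≤ Module.finrank K ↥(p.last) by
    exact (h p.length p rfl).trans (Submodule.finrank_le _)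
  intro n
  induction n with
  | zero => intro p _; exact Nat.zero_le _
  | succ n ih =>
    intro p hp
    have hlen : p.length ≠ 0 := by omega
    have h1 : p.eraseLast.length = n := by simp [RelSeries.eraseLast, hp]
    have h2 : p.eraseLast.last < p.last := by
      have : p.eraseLast.last = p ⟨p.length - 1, by omega⟩ := by
        simp [RelSeries.eraseLast, RelSeries.last, Fin.last]
      rw [this]
      apply p.strictMono
      simp [Fin.lt_def, RelSeries.last, Fin.last]; omega
    have := ih p.eraseLast h1
    have hlt := Submodule.finrank_lt_finrank_of_lt h2
    omega

end VS
section VS2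

variable {A : Type*} [CommRing A] [IsLocalRing A]

local notation "k" => A ⧸ (maximalIdeal A)

lemma cbd_of_span (s : Finset A) (N : Ideal A) (hNP : N ≤ Ideal.span (s : Set A))
    (hmP : maximalIdeal A * Ideal.span (s : Set A) ≤ N) :
    cbd N (Ideal.span (s : Set A)) s.card := by
  classical
  set P := Ideal.span (s : Set A) with hP
  set V : Submodule A (A ⧸ N) := Submodule.map N.mkQ P with hV
  letI : Field k := Ideal.Quotient.field (maximalIdeal A)
  letI : Module k ↥V := (torsion_aux N P hmP).module
  -- A-submodules of V are k-submodules
  let toK : Submodule A ↥V → Submodule k ↥V := fun W =>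
    { carrier := W
      add_mem' := fun h1 h2 => W.add_mem h1 h2
      zero_mem' := W.zero_mem
      smul_mem' := by
        rintro c v hv
        obtain ⟨a, rfl⟩ := Ideal.Quotient.mk_surjective c
        exact W.smul_mem a hv }
  have toK_mem : ∀ (W : Submodule A ↥V) (v : ↥V), v ∈ toK W ↔ v ∈ W := fun _ _ => Iff.rfl
  have toK_strict : ∀ {W1 W2 : Submodule A ↥V}, W1 < W2 → toK W1 < toK W2 := by
    intro W1 W2 h
    rw [SetLike.lt_iff_le_and_exists] at h ⊢
    obtain ⟨hle, z, hz1, hz2⟩ := h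
    exact ⟨fun v hv => hle hv, z, hz1, hz2⟩
  -- generators of V over k
  let gen : {a // a ∈ s} → ↥V := fun a =>
    ⟨N.mkQ a.1, Submodule.mem_map_of_mem (Ideal.subset_span a.2)⟩
  have hgenA : Submodule.span A (Set.range gen) = (⊤ : Submodule A ↥V) := by
    apply Submodule.map_injective_of_injective (Submodule.injective_subtype V)
    rw [Submodule.map_span, Submodule.map_subtype_top]
    have himg : V.subtype '' (Set.range gen) = N.mkQ '' (s : Set A) := by
      ext w
      constructor
      · rintro ⟨v, ⟨a, rfl⟩, rfl⟩; exact ⟨a.1, a.2, rfl⟩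
      · rintro ⟨a, ha, rfl⟩; exact ⟨gen ⟨a, ha⟩, ⟨⟨a, ha⟩, rfl⟩, rfl⟩
    rw [himg, ← Submodule.map_span, hV, hP, Ideal.submodule_span_eq]
  let toA : Submodule k ↥V → Submodule A ↥V := fun W =>
    { carrier := W
      add_mem' := fun h1 h2 => W.add_mem h1 h2
      zero_mem' := W.zero_mem
      smul_mem' := fun a v hv => W.smul_mem (Ideal.Quotient.mk (maximalIdeal A) a) hv }
  have hgenK : Submodule.span k (Set.range gen) = (⊤ : Submodule k ↥V) := by
    rw [eq_top_iff]
    intro v _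
    have hv : v ∈ Submodule.span A (Set.range gen) := by rw [hgenA]; trivial
    have hle : Submodule.span A (Set.range gen) ≤ toA (Submodule.span k (Set.range gen)) :=
      Submodule.span_le.mpr (fun w hw => Submodule.subset_span hw)
    exact hle hv
  haveI : Module.Finite k ↥V :=
    ⟨Submodule.fg_def.mpr ⟨Set.range gen, Set.finite_range _, hgenK⟩⟩
  have hd : Module.finrank k ↥V ≤ s.card := by
    have h1 := finrank_span_le_card (R := k) (Set.range gen)
    rw [hgenK, finrank_top] at h1
    refine h1.trans ?_
    rw [Set.toFinset_range]
    exact (Finset.card_image_le).trans (by simp)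
  -- the chain bound
  intro c hc1 hc2
  let G : Ideal A → Submodule k ↥V := fun X =>
    toK (Submodule.comap V.subtype (Submodule.map N.mkQ X))
  have hGstrict : ∀ {X Y : Ideal A}, N ≤ X → X < Y → Y ≤ P → G X < G Y := by
    intro X Y hNX hXY hYP
    have hmapV : ∀ {Z : Ideal A}, Z ≤ P → Submodule.map N.mkQ Z ≤ V :=
      fun hZ => Submodule.map_mono hZ
    have h1 : Submodule.map N.mkQ X < Submodule.map N.mkQ Y := by
      refine lt_of_le_of_ne (Submodule.map_mono hXY.le) (fun heq => ?_)
      have := congrArg (Submodule.comap N.mkQ) heq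
      rw [Submodule.comap_map_mkQ, Submodule.comap_map_mkQ,
        sup_eq_right.mpr hNX, sup_eq_right.mpr (hNX.trans hXY.le)] at this
      exact hXY.ne this
    have h2 : Submodule.comap V.subtype (Submodule.map N.mkQ X) <
        Submodule.comap V.subtype (Submodule.map N.mkQ Y) := by
      refine lt_of_le_of_ne (Submodule.comap_mono h1.le) (fun heq => ?_)
      have := congrArg (Submodule.map V.subtype) heq
      rw [Submodule.map_comap_subtype, Submodule.map_comap_subtype,
        inf_eq_right.mpr (hmapV (hXY.le.trans hYP)), inf_eq_right.mpr (hmapV hYP)] at this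
      exact h1.ne this
    exact toK_strict h2
  let p : LTSeries (Submodule k ↥V) :=
    { length := c.length
      toFun := fun i => G (c i)
      step := fun i => by
        apply hGstrict
        · exact hc1.trans (c.monotone (Fin.zero_le _))
        · exact c.step i
        · exact (c.monotone (Fin.le_last _)).trans hc2 }
  have hlen : p.length ≤ Module.finrank k ↥V := ltSeries_length_le_finrank (K := k) p
  exact le_trans hlen hd

end VS2
section VS3

variable {A : Type*} [CommRing A] [IsLocalRing A]

local notation "k" => A ⧸ (maximalIdeal A)

lemma mu_le_of_cbd [IsNoetherianRing A] (J : Ideal A) {n : ℕ}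
    (h : cbd (maximalIdeal A * J) J n) : mu J ≤ n := by
  classical
  obtain ⟨s, hs⟩ : J.FG := IsNoetherian.noetherian J
  set N : Ideal A := maximalIdeal A * J with hN
  have hNJ : N ≤ J := Ideal.mul_le_right
  have hmJ : maximalIdeal A * J ≤ N := le_refl _
  set V : Submodule A (A ⧸ N) := Submodule.map N.mkQ J with hV
  letI : Field k := Ideal.Quotient.field (maximalIdeal A)
  letI : Module k ↥V := (torsion_aux N J hmJ).module
  let toK : Submodule A ↥V → Submodule k ↥V := fun W =>
    { carrier := W
      add_mem' := fun h1 h2 => W.add_mem h1 h2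
      zero_mem' := W.zero_mem
      smul_mem' := by
        rintro c v hv
        obtain ⟨a, rfl⟩ := Ideal.Quotient.mk_surjective c
        exact W.smul_mem a hv }
  let toA : Submodule k ↥V → Submodule A ↥V := fun W =>
    { carrier := W
      add_mem' := fun h1 h2 => W.add_mem h1 h2
      zero_mem' := W.zero_mem
      smul_mem' := fun a v hv => W.smul_mem (Ideal.Quotient.mk (maximalIdeal A) a) hv }
  have toA_strict : ∀ {W1 W2 : Submodule k ↥V}, W1 < W2 → toA W1 < toA W2 := by
    intro W1 W2 h
    rw [SetLike.lt_iff_le_and_exists] at h ⊢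
    obtain ⟨hle, z, hz1, hz2⟩ := h
    exact ⟨fun v hv => hle hv, z, hz1, hz2⟩
  -- finite dimensionality
  let gen : {a // a ∈ s} → ↥V := fun a =>
    ⟨N.mkQ a.1, Submodule.mem_map_of_mem (hs ▸ Ideal.subset_span a.2)⟩
  have hgenA : Submodule.span A (Set.range gen) = (⊤ : Submodule A ↥V) := by
    apply Submodule.map_injective_of_injective (Submodule.injective_subtype V)
    rw [Submodule.map_span, Submodule.map_subtype_top]
    have himg : V.subtype '' (Set.range gen) = N.mkQ '' (s : Set A) := by
      ext w
      constructor
      · rintro ⟨v, ⟨a, rfl⟩, rfl⟩; exact ⟨a.1, a.2, rfl⟩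
      · rintro ⟨a, ha, rfl⟩; exact ⟨gen ⟨a, ha⟩, ⟨⟨a, ha⟩, rfl⟩, rfl⟩
    rw [himg, ← Submodule.map_span, hV, ← hs, Ideal.submodule_span_eq]
  have hgenK : Submodule.span k (Set.range gen) = (⊤ : Submodule k ↥V) := by
    rw [eq_top_iff]
    intro v _
    have hv : v ∈ Submodule.span A (Set.range gen) := by rw [hgenA]; trivial
    have hle : Submodule.span A (Set.range gen) ≤ toA (Submodule.span k (Set.range gen)) :=
      Submodule.span_le.mpr (fun w hw => Submodule.subset_span hw)
    exact hle hv
  haveI : Module.Finite k ↥V :=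
    ⟨Submodule.fg_def.mpr ⟨Set.range gen, Set.finite_range _, hgenK⟩⟩
  set d := Module.finrank k ↥V with hd
  let b := Module.finBasis k ↥V
  -- a chain of ideals between m*J and J of length d
  let H : Submodule k ↥V → Ideal A := fun W =>
    Submodule.comap N.mkQ (Submodule.map V.subtype (toA W))
  have hHstrict : ∀ {W1 W2 : Submodule k ↥V}, W1 < W2 → H W1 < H W2 := by
    intro W1 W2 hW
    have h1 : Submodule.map V.subtype (toA W1) < Submodule.map V.subtype (toA W2) :=
      Submodule.map_strictMono_of_injective (Submodule.injective_subtype V) (toA_strict hW)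
    refine lt_of_le_of_ne (Submodule.comap_mono h1.le) (fun heq => ?_)
    have := congrArg (Submodule.map N.mkQ) heq
    rw [Submodule.map_comap_eq_of_surjective (N.mkQ_surjective) _,
      Submodule.map_comap_eq_of_surjective (N.mkQ_surjective) _] at this
    exact h1.ne this
  have hNle : ∀ W, N ≤ H W := by
    intro W a ha
    show N.mkQ a ∈ Submodule.map V.subtype (toA W)
    have : N.mkQ a = 0 := by rw [Submodule.mkQ_apply, Submodule.Quotient.mk_eq_zero]; exact ha
    rw [this]
    exact Submodule.zero_mem _
  have hHtop : H ⊤ = J := by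
    have h1 : toA ⊤ = ⊤ := SetLike.ext fun x => Iff.rfl
    show Submodule.comap N.mkQ (Submodule.map V.subtype (toA ⊤)) = J
    rw [h1, Submodule.map_subtype_top, hV, Submodule.comap_map_mkQ, sup_eq_right.mpr hNJ]
  let flag : Fin (d + 1) → Submodule k ↥V := fun i =>
    Submodule.span k (⇑b '' {j : Fin d | (j : ℕ) < (i : ℕ)})
  have hflag : ∀ i : Fin d, flag i.castSucc < flag i.succ := by
    intro i
    refine lt_of_le_of_ne (Submodule.span_mono (Set.image_mono (fun j hj => ?_))) (fun heq => ?_)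
    · simp only [Set.mem_setOf_eq, Fin.coe_castSucc, Fin.val_succ] at hj ⊢
      exact Nat.lt_succ_of_lt hj
    · have hmem : b i ∈ flag i.succ := Submodule.subset_span ⟨i, Nat.lt_succ_self _, rfl⟩
    -- b i not in flag i.castSucc
      have hnot : b i ∉ flag i.castSucc := by
        apply (b.linearIndependent).notMem_span_image
        exact lt_irrefl (i : ℕ)
      rw [← heq] at hmem
      exact hnot hmem
  let q : LTSeries (Ideal A) :=
    { length := d
      toFun := fun i => H (flag i)
      step := fun i => hHstrict (hflag i) }
  have hdn : d ≤ n := by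
    have hq1 : N ≤ q.head := hNle _
    have hq2 : q.last ≤ J := by
      show H (flag (Fin.last d)) ≤ J
      have hset : {j : Fin d | (j : ℕ) < ((Fin.last d : Fin (d+1)) : ℕ)} = Set.univ := by
        ext j
        simpa using j.isLt
      have hflagtop : flag (Fin.last d) = ⊤ := by
        show Submodule.span k (⇑b '' {j : Fin d | (j : ℕ) < ((Fin.last d : Fin (d+1)) : ℕ)}) = ⊤
        rw [hset, Set.image_univ, b.span_eq]
      rw [hflagtop, hHtop]
    exact h q hq1 hq2
  -- now lift the basis to generators of J
  have hlift : ∀ i : Fin d, ∃ a ∈ J, N.mkQ a = (b i : A ⧸ N) := by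
    intro i
    have : (b i : A ⧸ N) ∈ V := (b i).2
    obtain ⟨a, ha, haa⟩ := Submodule.mem_map.mp this
    exact ⟨a, ha, haa⟩
  choose f hfJ hfmk using hlift
  set t : Finset A := Finset.image f Finset.univ with ht
  have htJ : Ideal.span (t : Set A) ≤ J := by
    rw [Ideal.span_le, ht]
    intro a ha
    simp only [Finset.coe_image, Finset.coe_univ, Set.image_univ, Set.mem_range] at ha
    obtain ⟨i, rfl⟩ := ha
    exact hfJ i
  have hmap : Submodule.map N.mkQ (Ideal.span (t : Set A)) = Submodule.map N.mkQ J := by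
    have hbvec : Submodule.span A (Set.range (fun i => (b i : ↥V))) = ⊤ := by
      rw [eq_top_iff]
      intro v _
      have hv : v ∈ Submodule.span k (Set.range ⇑b) := by rw [b.span_eq]; trivial
      have hle : Submodule.span k (Set.range ⇑b) ≤
          toK (Submodule.span A (Set.range (fun i => (b i : ↥V)))) :=
        Submodule.span_le.mpr (fun w hw => Submodule.subset_span hw)
      exact hle hv
    have h2 : Submodule.map V.subtype (Submodule.span A (Set.range (fun i => (b i : ↥V)))) = V := by
      rw [hbvec, Submodule.map_subtype_top]
    rw [Submodule.map_span] at h2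
    have himg : V.subtype '' (Set.range (fun i => (b i : ↥V))) = N.mkQ '' (t : Set A) := by
      ext w
      constructor
      · rintro ⟨v, ⟨i, rfl⟩, rfl⟩
        exact ⟨f i, by simp [ht], hfmk i⟩
      · rintro ⟨a, ha, rfl⟩
        simp only [ht, Finset.coe_image, Finset.coe_univ, Set.image_univ, Set.mem_range] at ha
        obtain ⟨i, rfl⟩ := ha
        exact ⟨b i, ⟨i, rfl⟩, (hfmk i).symm⟩
    rw [himg] at h2
    rw [← Submodule.map_span, Ideal.submodule_span_eq] at h2
    rw [h2, hV]
  have hTJ : Ideal.span (t : Set A) = J := by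
    have hsm : (maximalIdeal A) • J = N := by rw [Ideal.smul_eq_mul]
    have := (IsLocalRing.map_mkQ_eq (M := A) (N₁ := Ideal.span (t : Set A)) (N₂ := J)
      htJ (IsNoetherian.noetherian J))
    rw [hsm] at this
    exact this.mp hmap
  have : mu J ≤ t.card := Nat.sInf_le ⟨t, rfl, hTJ⟩
  refine this.trans (le_trans ?_ hdn)
  exact (Finset.card_image_le).trans (by simp)

end VS3
section Rees

variable {A : Type*} [CommRing A] [IsLocalRing A] [IsNoetherianRing A]

lemma mu_spec (I : Ideal A) : ∃ s : Finset A, s.card = mu I ∧ Ideal.span (s : Set A) = I := by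
  have hne : {n | ∃ s : Finset A, s.card = n ∧ Ideal.span (s : Set A) = I}.Nonempty := by
    obtain ⟨s, hs⟩ := IsNoetherian.noetherian I
    exact ⟨s.card, s, rfl, hs⟩
  obtain ⟨s, h1, h2⟩ := Nat.sInf_mem hne
  exact ⟨s, h1, h2⟩

lemma exists_cbd (I J : Ideal A) (t : ℕ) (ht : maximalIdeal A ^ t ≤ I) :
    ∃ B, cbd I J B := by
  suffices h : ∀ u : ℕ, ∃ B, cbd (maximalIdeal A ^ u * J) J B by
    obtain ⟨B, hB⟩ := h t
    exact ⟨B, cbd_mono (le_trans Ideal.mul_le_left ht) le_rfl hB⟩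
  intro u
  induction u with
  | zero => exact ⟨0, by simpa [pow_zero, one_mul] using cbd_self J⟩
  | succ u ih =>
    obtain ⟨B, hB⟩ := ih
    obtain ⟨s, hs⟩ := IsNoetherian.noetherian (maximalIdeal A ^ u * J)
    replace hs : Ideal.span (s : Set A) = maximalIdeal A ^ u * J := hs
    have hrw : maximalIdeal A ^ (u + 1) * J = maximalIdeal A * (maximalIdeal A ^ u * J) := by
      ring
    have key := cbd_of_span s (maximalIdeal A ^ (u + 1) * J)
      (by rw [hs, hrw]; exact Ideal.mul_le_right)
      (by rw [hs, hrw])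
    rw [hs] at key
    exact ⟨s.card + B, cbd_mod (by rw [hrw]; exact Ideal.mul_le_right) Ideal.mul_le_right key hB⟩

lemma rees_bound {I J : Ideal A} (hIJ : I ≤ J)
    (hprim : ∃ t : ℕ, maximalIdeal A ^ t ≤ I)
    (hfull : ∃ x ∈ maximalIdeal A, (maximalIdeal A * I).colon (Ideal.span {x}) = I) :
    mu J ≤ mu I := by
  classical
  obtain ⟨x, hx, hcolon⟩ := hfull
  obtain ⟨s, hscard, hsspan⟩ := mu_spec I
  obtain ⟨t, ht⟩ := hprim
  set mI : Ideal A := maximalIdeal A * I with hmI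
  -- chains between m*I and I are bounded by mu I
  have haI : cbd mI I (mu I) := by
    have := cbd_of_span s mI (by rw [hsspan]; exact Ideal.mul_le_right)
      (by rw [hsspan])
    rw [hsspan, hscard] at this
    exact this
  -- maximal chain length between I and J
  obtain ⟨B, hB⟩ := exists_cbd I J t ht
  set lens : Set ℕ := {l | ∃ c : LTSeries (Ideal A), I ≤ c.head ∧ c.last ≤ J ∧ c.length = l}
    with hlens
  have hlne : lens.Nonempty := ⟨0, RelSeries.singleton _ I, le_rfl, hIJ, rfl⟩
  have hbdd : BddAbove lens := ⟨B, by rintro l ⟨c, h1, h2, rfl⟩; exact hB c h1 h2⟩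
  set n := sSup lens with hn
  obtain ⟨c₀, hc01, hc02, hc03⟩ := Nat.sSup_mem hlne hbdd
  have hcbIJ : cbd I J n := fun c h1 h2 => le_csSup hbdd ⟨c, h1, h2, rfl⟩
  -- the injective multiplication-by-x map (A/I) → (A/mI)
  have hker : I ≤ LinearMap.ker (mI.mkQ ∘ₗ LinearMap.lsmul A A x) := by
    intro a ha
    rw [LinearMap.mem_ker]
    show mI.mkQ (x • a) = 0
    rw [Submodule.mkQ_apply, Submodule.Quotient.mk_eq_zero]
    exact Ideal.mul_mem_mul hx ha
  set φ : (A ⧸ I) →ₗ[A] (A ⧸ mI) :=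
    Submodule.liftQ I (mI.mkQ ∘ₗ LinearMap.lsmul A A x) hker with hφ
  have hφinj : Function.Injective φ := by
    rw [← LinearMap.ker_eq_bot, Submodule.eq_bot_iff]
    intro y hy
    obtain ⟨a, rfl⟩ := Submodule.Quotient.mk_surjective I y
    have h0 : φ (Submodule.Quotient.mk a) = 0 := LinearMap.mem_ker.mp hy
    rw [hφ, Submodule.liftQ_apply] at h0
    have : x • a ∈ mI := by
      rwa [LinearMap.comp_apply, Submodule.mkQ_apply, Submodule.Quotient.mk_eq_zero] at h0
    have haI' : a ∈ I := by
      rw [← hcolon, Ideal.mem_colon_span_singleton]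
      rwa [smul_eq_mul, mul_comm] at this
    rw [Submodule.Quotient.mk_eq_zero]
    exact haI'
  set xJ : Ideal A := Ideal.span {x} * J with hxJ
  -- transport of chains
  let F : Ideal A → Ideal A := fun X =>
    Submodule.comap mI.mkQ (Submodule.map φ (Submodule.map I.mkQ X))
  have hFstrict : ∀ {X Y : Ideal A}, I ≤ X → X < Y → F X < F Y := by
    intro X Y hIX hXY
    have h1 : Submodule.map I.mkQ X < Submodule.map I.mkQ Y := by
      refine lt_of_le_of_ne (Submodule.map_mono hXY.le) (fun heq => ?_)
      have := congrArg (Submodule.comap I.mkQ) heq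
      rw [Submodule.comap_map_mkQ, Submodule.comap_map_mkQ,
        sup_eq_right.mpr hIX, sup_eq_right.mpr (hIX.trans hXY.le)] at this
      exact hXY.ne this
    have h2 : Submodule.map φ (Submodule.map I.mkQ X) < Submodule.map φ (Submodule.map I.mkQ Y) :=
      Submodule.map_strictMono_of_injective hφinj h1
    refine lt_of_le_of_ne (Submodule.comap_mono h2.le) (fun heq => ?_)
    have := congrArg (Submodule.map mI.mkQ) heq
    rw [Submodule.map_comap_eq_of_surjective (mI.mkQ_surjective) _,
      Submodule.map_comap_eq_of_surjective (mI.mkQ_surjective) _] at this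
    exact h2.ne this
  have hFge : ∀ X, mI ≤ F X := by
    intro X a ha
    show mI.mkQ a ∈ Submodule.map φ (Submodule.map I.mkQ X)
    have : mI.mkQ a = 0 := by rw [Submodule.mkQ_apply, Submodule.Quotient.mk_eq_zero]; exact ha
    rw [this]
    exact Submodule.zero_mem _
  have hFle : ∀ X, X ≤ J → F X ≤ mI ⊔ xJ := by
    intro X hXJ
    have h1 : Submodule.map φ (Submodule.map I.mkQ X) =
        Submodule.map mI.mkQ (Submodule.map (LinearMap.lsmul A A x) X) := by
      have hcomp : φ ∘ₗ I.mkQ = mI.mkQ ∘ₗ LinearMap.lsmul A A x :=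
        I.liftQ_mkQ _ hker
      rw [← Submodule.map_comp, ← Submodule.map_comp, hcomp]
    have h2 : Submodule.map (LinearMap.lsmul A A x) X ≤ xJ := by
      rintro _ ⟨a, ha, rfl⟩
      show x • a ∈ xJ
      rw [smul_eq_mul]
      exact Ideal.mul_mem_mul (Ideal.mem_span_singleton_self x) (hXJ ha)
    show Submodule.comap mI.mkQ (Submodule.map φ (Submodule.map I.mkQ X)) ≤ mI ⊔ xJ
    rw [h1, Submodule.comap_map_mkQ]
    exact sup_le le_sup_left (le_trans h2 le_sup_right)
  -- transported maximal chain
  let q : LTSeries (Ideal A) :=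
    { length := c₀.length
      toFun := fun i => F (c₀ i)
      step := fun i => hFstrict (hc01.trans (c₀.monotone (Fin.zero_le _))) (c₀.step i) }
  have hq_head : mI ≤ q.head := hFge _
  have hq_last : q.last ≤ mI ⊔ xJ := hFle _ ((c₀.monotone (Fin.le_last _)).trans hc02)
  have hxJm : mI ⊔ xJ ≤ maximalIdeal A * J :=
    sup_le (Ideal.mul_mono_right hIJ)
      (Ideal.mul_mono_left (Ideal.span_le.mpr (Set.singleton_subset_iff.mpr hx)))
  have hqlen : q.length = n := hc03
  -- every chain between m*J and J has length at most mu I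
  have hkey : cbd (maximalIdeal A * J) J (mu I) := by
    intro c h1 h2
    have hql : q.last ≤ c.head := hq_last.trans (hxJm.trans h1)
    have hmIJ : mI ≤ I := Ideal.mul_le_right
    rcases eq_or_lt_of_le hql with heq | hlt
    · set cc := q.smash c heq with hcc
      have hlen : cc.length = q.length + c.length := rfl
      have hb := cbd_mod hmIJ hIJ haI hcbIJ cc
        (by rw [hcc, RelSeries.head_smash]; exact hq_head)
        (by rw [hcc, RelSeries.last_smash]; exact h2)
      omega
    · set cc := q.append c hlt with hcc
      have hlen : cc.length = q.length + c.length + 1 := rfl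
      have hb := cbd_mod hmIJ hIJ haI hcbIJ cc
        (by rw [hcc, RelSeries.head_append]; exact hq_head)
        (by rw [hcc, RelSeries.last_append]; exact h2)
      omega
  exact mu_le_of_cbd J hkey

end Rees

/-- For any `m`-primary `m`-full ideal `I` there is an ideal `I' ⊇ I` with the
strong Rees property and `μ(I') = μ(I)`. -/
theorem stmt4 {A : Type*} [CommRing A] [IsNoetherianRing A] [IsLocalRing A]
    (I : Ideal A) (hIm : I ≤ maximalIdeal A) (hprimary : ∃ k : ℕ, maximalIdeal A ^ k ≤ I)
    (hfull : ∃ x ∈ maximalIdeal A, (maximalIdeal A * I).colon (Ideal.span {x}) = I) :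
    ∃ I' : Ideal A, I ≤ I' ∧ (∀ J : Ideal A, I' < J → mu J < mu I') ∧ mu I' = mu I := by
  classical
  set S : Set (Ideal A) := {J | I ≤ J ∧ mu J = mu I} with hS
  have hwf : WellFounded ((· > ·) : Ideal A → Ideal A → Prop) := wellFounded_gt
  obtain ⟨I', hI'S, hmax⟩ := hwf.has_min S ⟨I, le_rfl, rfl⟩
  obtain ⟨hII', hmuI'⟩ := hI'S
  refine ⟨I', hII', ?_, hmuI'⟩
  intro J hJ
  have h1 : mu J ≤ mu I := rees_bound (hII'.trans hJ.le) hprimary hfull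
  have h2 : mu J ≠ mu I := fun he => hmax J ⟨hII'.trans hJ.le, he⟩ hJ
  rw [hmuI']
  exact lt_of_le_of_ne h1 h2
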